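/- With thresholds defined as positions of minima in LCP ranges: given q' < q < q'' where q', q'' are suffix-array ranks of suffixes at positions p', p'' and q is the rank of the suffix at position s, then LCE(p', s) ≥ LCE(p'', s) if and only if some position attaining min(LCP[q'+1..q'']) lies in the interval [q+1, q'']. -/

import Mathlib

/-- `lce T a b` = length of the longest common prefix of the suffixes
`T[a..]` and `T[b..]`. -/
noncomputable def lce {α : Type*} (T : List α) (a b : ℕ) : ℕ :=
  letI := Classical.decPred (fun ℓ : ℕ => (T.drop a).take ℓ = (T.drop b).take ℓ)
  Nat.findGreatest (fun ℓ : ℕ => (T.drop a).take ℓ = (T.drop b).take ℓ) T.length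

/-- The LCP array of `T` w.r.t. the suffix array `SA`. -/
noncomputable def lcpArr {α : Type*} (T : List α) (SA : ℕ → ℕ) (k : ℕ) : ℕ :=
  lce T (SA (k - 1)) (SA k)

section Aux
variable {α : Type*}

private lemma lce_pred_mono {T : List α} {a b : ℕ} {ℓ m : ℕ} (hm : m ≤ ℓ)
    (h : (T.drop a).take ℓ = (T.drop b).take ℓ) :
    (T.drop a).take m = (T.drop b).take m := by
  have := congrArg (List.take m) h
  simpa [List.take_take, Nat.min_eq_left hm] using this


private lemma inf'_set_congr {β : Type*} {s t : Finset β} (h : s = t)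
    (hs : s.Nonempty) (ht : t.Nonempty) (f : β → ℕ) :
    s.inf' hs f = t.inf' ht f := by subst h; rfl

private lemma lce_spec (T : List α) (a b : ℕ) :
    (T.drop a).take (lce T a b) = (T.drop b).take (lce T a b) := by
  letI := Classical.decPred (fun ℓ : ℕ => (T.drop a).take ℓ = (T.drop b).take ℓ)
  exact Nat.findGreatest_spec (P := fun ℓ : ℕ => (T.drop a).take ℓ = (T.drop b).take ℓ)
    (Nat.zero_le _) rfl

private lemma le_lce (T : List α) (a b : ℕ) {ℓ : ℕ} (hℓ : ℓ ≤ T.length)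
    (h : (T.drop a).take ℓ = (T.drop b).take ℓ) : ℓ ≤ lce T a b := by
  letI := Classical.decPred (fun ℓ : ℕ => (T.drop a).take ℓ = (T.drop b).take ℓ)
  exact Nat.le_findGreatest hℓ h

private lemma lce_le_length (T : List α) (a b : ℕ) : lce T a b ≤ T.length := by
  letI := Classical.decPred (fun ℓ : ℕ => (T.drop a).take ℓ = (T.drop b).take ℓ)
  exact Nat.findGreatest_le _

private lemma lce_comm (T : List α) (a b : ℕ) : lce T a b = lce T b a := by
  apply le_antisymm
  · exact le_lce T b a (lce_le_length T a b) (lce_spec T a b).symm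
  · exact le_lce T a b (lce_le_length T b a) (lce_spec T b a).symm

private lemma min_le_lce (T : List α) (a b c : ℕ) :
    min (lce T a b) (lce T b c) ≤ lce T a c := by
  set m := min (lce T a b) (lce T b c) with hm
  have h1 : (T.drop a).take m = (T.drop b).take m :=
    lce_pred_mono (min_le_left _ _) (lce_spec T a b)
  have h2 : (T.drop b).take m = (T.drop c).take m :=
    lce_pred_mono (min_le_right _ _) (lce_spec T b c)
  exact le_lce T a c (le_trans (min_le_left _ _) (lce_le_length T a b)) (h1.trans h2)

private lemma lex_take [LinearOrder α] :
    ∀ (m : ℕ) (x y z : List α), List.Lex (· < ·) x y → List.Lex (· < ·) y z →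
      x.take m = z.take m → y.take m = x.take m := by
  intro m
  induction m with
  | zero => intro x y z _ _ _; simp
  | succ m ih =>
    intro x y z hxy hyz hxz
    cases x with
    | nil =>
      simp only [List.take_nil] at hxz
      have hz : z = [] := by
        cases z with
        | nil => rfl
        | cons c z' => simp at hxz
      subst hz
      exact absurd hyz List.not_lex_nil
    | cons a x' =>
      cases z with
      | nil => simp at hxz
      | cons c z' =>
        simp only [List.take_succ_cons, List.cons.injEq] at hxz
        obtain ⟨hac, htail⟩ := hxz
        subst hac
        cases y with
        | nil => exact absurd hxy List.not_lex_nil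
        | cons b y' =>
          cases hxy with
          | rel hab =>
            cases hyz with
            | rel hbc => exact absurd (hab.trans hbc) (lt_irrefl _)
            | cons hyz' => exact absurd hab (lt_irrefl _)
          | cons hxy' =>
            cases hyz with
            | rel hbc => exact absurd hbc (lt_irrefl _)
            | cons hyz' =>
              simp only [List.take_succ_cons, List.cons.injEq, true_and]
              exact ih x' y' z' hxy' hyz' htail

variable [LinearOrder α] (T : List α) (SA : ℕ → ℕ)
variable (hsorted : ∀ i j, i < j → j < T.length →
      List.Lex (· < ·) (T.drop (SA i)) (T.drop (SA j)))

include hsorted in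
/-- sandwich: for `i < j < k`, the lce of the outer pair is at most the lce of
the inner pairs. -/
private lemma lce_sandwich {i j k : ℕ} (hij : i < j) (hjk : j < k)
    (hk : k < T.length) :
    lce T (SA i) (SA k) ≤ min (lce T (SA i) (SA j)) (lce T (SA j) (SA k)) := by
  set m := lce T (SA i) (SA k) with hm
  have hspec : (T.drop (SA i)).take m = (T.drop (SA k)).take m := lce_spec T _ _
  have hy : (T.drop (SA j)).take m = (T.drop (SA i)).take m :=
    lex_take m _ _ _ (hsorted i j hij (hjk.trans hk)) (hsorted j k hjk hk) hspec
  have hlen : m ≤ T.length := lce_le_length T _ _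
  refine le_min (le_lce T _ _ hlen hy.symm) (le_lce T _ _ hlen ?_)
  exact hy.trans hspec

include hsorted in
private lemma lce_eq_inf : ∀ (j i : ℕ), (hij : i < j) → (hj : j < T.length) →
    lce T (SA i) (SA j) =
      (Finset.Icc (i + 1) j).inf' (Finset.nonempty_Icc.mpr (by omega))
        (lcpArr T SA) := by
  intro j
  induction j with
  | zero => intro i hij _; omega
  | succ j ih =>
    intro i hij hj
    rcases Nat.lt_or_ge i j with hij' | hij'
    · -- i < j, split off the last element
      have hj' : j < T.length := by omega
      have hsplit : Finset.Icc (i + 1) j ∪ Finset.Icc (j + 1) (j + 1)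
          = Finset.Icc (i + 1) (j + 1) := by
        ext x
        simp only [Finset.mem_union, Finset.mem_Icc]
        omega
      have hne1 : (Finset.Icc (i + 1) j).Nonempty := Finset.nonempty_Icc.mpr (by omega)
      have hne2 : (Finset.Icc (j + 1) (j + 1)).Nonempty := Finset.nonempty_Icc.mpr le_rfl
      have hinf : (Finset.Icc (i + 1) (j + 1)).inf'
            (Finset.nonempty_Icc.mpr (by omega)) (lcpArr T SA)
          = min ((Finset.Icc (i + 1) j).inf' hne1 (lcpArr T SA))
              (lcpArr T SA (j + 1)) := by
        rw [inf'_set_congr hsplit.symm _ ((hne1.mono Finset.subset_union_left)),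
          Finset.inf'_union hne1 hne2]
        congr 1
        exact inf'_set_congr (Finset.Icc_self (j+1)) _ (by simp) _
        
      rw [hinf, ← ih i hij' hj']
      have hlcp : lcpArr T SA (j + 1) = lce T (SA j) (SA (j + 1)) := by
        simp [lcpArr]
      rw [hlcp]
      apply le_antisymm
      · exact lce_sandwich T SA hsorted hij' (Nat.lt_succ_self j) hj
      · exact min_le_lce T (SA i) (SA j) (SA (j + 1))
    · -- i = j: base case, interval is a singleton
      have hij2 : i = j := by omega
      subst hij2
      have : lcpArr T SA (i + 1) = lce T (SA i) (SA (i + 1)) := by simp [lcpArr]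
      simp [Finset.Icc_self, this]

end Aux

/-- with `q' < q < q''` suffix-array ranks of the suffixes at
text positions `p' = SA[q']`, `s = SA[q]`, `p'' = SA[q'']`, we have
`LCE(p', s) ≥ LCE(p'', s)` if and only if some position attaining
`min(LCP[q'+1..q''])` lies in the interval `[q+1, q'']`. -/
theorem lce_comparison_iff_threshold {α : Type*} [LinearOrder α]
    (T : List α) (SA : ℕ → ℕ)
    (hSA : ∀ i, i < T.length → SA i < T.length)
    (hsorted : ∀ i j, i < j → j < T.length →
      List.Lex (· < ·) (T.drop (SA i)) (T.drop (SA j)))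
    (q' q q'' : ℕ) (h1 : q' < q) (h2 : q < q'') (h3 : q'' < T.length) :
    lce T (SA q'') (SA q) ≤ lce T (SA q') (SA q) ↔
      ∃ k, q + 1 ≤ k ∧ k ≤ q'' ∧
        lcpArr T SA k =
          (Finset.Icc (q' + 1) q'').inf' (Finset.nonempty_Icc.mpr (by omega))
            (lcpArr T SA) := by
  have hne1 : (Finset.Icc (q' + 1) q).Nonempty := Finset.nonempty_Icc.mpr (by omega)
  have hne2 : (Finset.Icc (q + 1) q'').Nonempty := Finset.nonempty_Icc.mpr (by omega)
  set A := (Finset.Icc (q' + 1) q).inf' hne1 (lcpArr T SA) with hA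
  set B := (Finset.Icc (q + 1) q'').inf' hne2 (lcpArr T SA) with hB
  have hq : q < T.length := by omega
  have hLA : lce T (SA q') (SA q) = A :=
    lce_eq_inf T SA hsorted q q' h1 hq
  have hLB : lce T (SA q'') (SA q) = B := by
    rw [lce_comm]
    exact lce_eq_inf T SA hsorted q'' q h2 h3
  have hsplit : Finset.Icc (q' + 1) q ∪ Finset.Icc (q + 1) q''
      = Finset.Icc (q' + 1) q'' := by
    ext x
    simp only [Finset.mem_union, Finset.mem_Icc]
    omega
  have hinf : (Finset.Icc (q' + 1) q'').inf'
        (Finset.nonempty_Icc.mpr (by omega)) (lcpArr T SA) = min A B := by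
    rw [inf'_set_congr hsplit.symm _ (hne1.mono Finset.subset_union_left),
      Finset.inf'_union hne1 hne2]
  rw [hLA, hLB, hinf]
  constructor
  · intro hBA
    obtain ⟨k, hk, hkeq⟩ := Finset.exists_mem_eq_inf' hne2 (lcpArr T SA)
    rw [Finset.mem_Icc] at hk
    exact ⟨k, hk.1, hk.2, by rw [← hkeq, ← hB, min_eq_right hBA]⟩
  · rintro ⟨k, hk1, hk2, hkeq⟩
    have hBk : B ≤ lcpArr T SA k :=
      Finset.inf'_le _ (Finset.mem_Icc.mpr ⟨hk1, hk2⟩)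
    rw [hkeq] at hBk
    calc B ≤ min A B := hBk
      _ ≤ A := min_le_left _ _
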